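/- The function φ ↦ ρ(φ) + φ - 1, where ρ(φ) = aφ/(aφ+(1-b)(1-φ)), has exactly one root in (0,1) when a > 0 and 1-b > 0 and a ≠ 1-b, namely φ_e = √(1-b)/(√a+√(1-b)). -/
import Mathlib


theorem stmt_9 (a b : ℝ) (ha : 0 < a) (ha1 : a ≤ 1) (hb0 : 0 ≤ b) (hb : b < 1)
    (hne : a ≠ 1 - b)
    (φe : ℝ) (hφe : φe = Real.sqrt (1 - b) / (Real.sqrt a + Real.sqrt (1 - b))) :
    (φe ∈ Set.Ioo (0:ℝ) 1 ∧ a * φe / (a * φe + (1 - b) * (1 - φe)) + φe - 1 = 0) ∧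
      ∀ φ ∈ Set.Ioo (0:ℝ) 1,
        a * φ / (a * φ + (1 - b) * (1 - φ)) + φ - 1 = 0 → φ = φe := by
  set s := Real.sqrt a with hsdef
  set t := Real.sqrt (1 - b) with htdef
  have hb1 : (0:ℝ) < 1 - b := by linarith
  have hs : 0 < s := Real.sqrt_pos.mpr ha
  have ht : 0 < t := Real.sqrt_pos.mpr hb1
  have hs2 : s ^ 2 = a := Real.sq_sqrt ha.le
  have ht2 : t ^ 2 = 1 - b := Real.sq_sqrt hb1.le
  have hst : 0 < s + t := by linarith
  have hden : a * φe + (1 - b) * (1 - φe) = s * t := by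
    rw [hφe, ← hs2, ← ht2]
    field_simp
    ring
  constructor
  · constructor
    · constructor
      · rw [hφe]; positivity
      · rw [hφe]
        rw [div_lt_one hst]
        linarith
    · rw [hden, hφe, ← hs2]
      field_simp
      ring
  · rintro φ ⟨hφ0, hφ1⟩ heq
    have hD : 0 < a * φ + (1 - b) * (1 - φ) := by
      have : 0 < a * φ := by positivity
      nlinarith
    have h1 : a * φ = (1 - φ) * (a * φ + (1 - b) * (1 - φ)) := by
      field_simp at heq
      linarith
    have h2 : (s * φ) ^ 2 = (t * (1 - φ)) ^ 2 := by
      linear_combination h1 + φ^2*hs2 - (1-φ)^2*ht2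
    have h3 : s * φ = t * (1 - φ) := by
      have hpos : 0 ≤ s * φ := by positivity
      have hpos2 : 0 ≤ t * (1 - φ) := by nlinarith
      nlinarith
    rw [hφe]
    rw [eq_div_iff (ne_of_gt hst)]
    nlinarith
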